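/- Let u : ℝ × ℝ³ → ℝ³ and G : ℝ × ℝ³ → ℝ³ be smooth. Assume u is divergence free, Σ_{m=1}^{3} ∂_m u_m = 0 on ℝ × ℝ³, and that G satisfies the deformation transport equation ∂_t G_i + Σ_{m=1}^{3} u_m ∂_m G_i = Σ_{m=1}^{3} G_m ∂_m u_i on ℝ × ℝ³ for i = 1,2,3. Then the divergence d = Σ_{i=1}^{3} ∂_i G_i satisfies the pure transport equation ∂_t d + Σ_{m=1}^{3} u_m ∂_m d = 0 on ℝ × ℝ³. -/

import Mathlib

open scoped BigOperators

noncomputable section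

/-! Partial derivatives of curried functions of several real variables. -/

/-- derivative in the 1st of 2 arguments -/
def d1_2 (g : ℝ → ℝ → ℝ) : ℝ → ℝ → ℝ := fun a b => deriv (fun s => g s b) a
/-- derivative in the 2nd of 2 arguments -/
def d2_2 (g : ℝ → ℝ → ℝ) : ℝ → ℝ → ℝ := fun a b => deriv (fun s => g a s) b

/-- derivative in the 1st of 3 arguments -/
def d1_3 (g : ℝ → ℝ → ℝ → ℝ) : ℝ → ℝ → ℝ → ℝ := fun a b c => deriv (fun s => g s b c) a
/-- derivative in the 2nd of 3 arguments -/
def d2_3 (g : ℝ → ℝ → ℝ → ℝ) : ℝ → ℝ → ℝ → ℝ := fun a b c => deriv (fun s => g a s c) b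
/-- derivative in the 3rd of 3 arguments -/
def d3_3 (g : ℝ → ℝ → ℝ → ℝ) : ℝ → ℝ → ℝ → ℝ := fun a b c => deriv (fun s => g a b s) c

/-- derivative in the 1st of 4 arguments -/
def d1_4 (g : ℝ → ℝ → ℝ → ℝ → ℝ) : ℝ → ℝ → ℝ → ℝ → ℝ := fun a b c e => deriv (fun s => g s b c e) a
/-- derivative in the 2nd of 4 arguments -/
def d2_4 (g : ℝ → ℝ → ℝ → ℝ → ℝ) : ℝ → ℝ → ℝ → ℝ → ℝ := fun a b c e => deriv (fun s => g a s c e) b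
/-- derivative in the 3rd of 4 arguments -/
def d3_4 (g : ℝ → ℝ → ℝ → ℝ → ℝ) : ℝ → ℝ → ℝ → ℝ → ℝ := fun a b c e => deriv (fun s => g a b s e) c
/-- derivative in the 4th of 4 arguments -/
def d4_4 (g : ℝ → ℝ → ℝ → ℝ → ℝ) : ℝ → ℝ → ℝ → ℝ → ℝ := fun a b c e => deriv (fun s => g a b c s) e

/-- spatial derivatives ∂₁, ∂₂, ∂₃ of v(t, x₁, x₂, x₃) -/
def dsp : Fin 3 → (ℝ → ℝ → ℝ → ℝ → ℝ) → (ℝ → ℝ → ℝ → ℝ → ℝ) := ![d2_4, d3_4, d4_4]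
/-- tangential derivatives ∂₁, ∂₂ of g(t, x₁, x₂) -/
def dtg : Fin 2 → (ℝ → ℝ → ℝ → ℝ) → (ℝ → ℝ → ℝ → ℝ) := ![d2_3, d3_3]
/-- spatial derivatives ∂₁, ∂₂, ∂₃ of v(x₁, x₂, x₃) -/
def dsp3 : Fin 3 → (ℝ → ℝ → ℝ → ℝ) → (ℝ → ℝ → ℝ → ℝ) := ![d1_3, d2_3, d3_3]
/-- derivatives ∂₁, ∂₂ of g(x₁, x₂) -/
def dtg2 : Fin 2 → (ℝ → ℝ → ℝ) → (ℝ → ℝ → ℝ) := ![d1_2, d2_2]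

/-- C^∞ smoothness for a function of 2 real variables -/
def smooth2 (g : ℝ → ℝ → ℝ) : Prop :=
  ContDiff ℝ (⊤ : ℕ∞) (fun p : ℝ × ℝ => g p.1 p.2)
/-- C^∞ smoothness for a function of 3 real variables -/
def smooth3 (g : ℝ → ℝ → ℝ → ℝ) : Prop :=
  ContDiff ℝ (⊤ : ℕ∞) (fun p : ℝ × ℝ × ℝ => g p.1 p.2.1 p.2.2)
/-- C^∞ smoothness for a function of 4 real variables -/
def smooth4 (g : ℝ → ℝ → ℝ → ℝ → ℝ) : Prop :=
  ContDiff ℝ (⊤ : ℕ∞) (fun p : ℝ × ℝ × ℝ × ℝ => g p.1 p.2.1 p.2.2.1 p.2.2.2)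

/-- trace of v(t,x₁,x₂,x₃) on the graph x₃ = f(t,x₁,x₂) -/
def tr (v : ℝ → ℝ → ℝ → ℝ → ℝ) (f : ℝ → ℝ → ℝ → ℝ) : ℝ → ℝ → ℝ → ℝ :=
  fun t x y => v t x y (f t x y)
/-- trace of v(x₁,x₂,x₃) on the graph x₃ = f(x₁,x₂) -/
def tr2 (v : ℝ → ℝ → ℝ → ℝ) (f : ℝ → ℝ → ℝ) : ℝ → ℝ → ℝ :=
  fun x y => v x y (f x y)

/-- the (non-normalized) outward normal N_f = (−∂₁f, −∂₂f, 1) of the graph of f(t,·) -/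
def Nf (f : ℝ → ℝ → ℝ → ℝ) : Fin 3 → ℝ → ℝ → ℝ → ℝ :=
  ![fun t x y => -(d2_3 f t x y), fun t x y => -(d3_3 f t x y), fun _ _ _ => 1]
/-- the (non-normalized) outward normal of the graph of a time-independent f -/
def Nf2 (f : ℝ → ℝ → ℝ) : Fin 3 → ℝ → ℝ → ℝ :=
  ![fun x y => -(d1_2 f x y), fun x y => -(d2_2 f x y), fun _ _ => 1]

/-- the interface material derivative D_t g = ∂_t g + u̲₁ ∂₁ g + u̲₂ ∂₂ g -/
def Dt (u : Fin 3 → ℝ → ℝ → ℝ → ℝ → ℝ) (f : ℝ → ℝ → ℝ → ℝ)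
    (g : ℝ → ℝ → ℝ → ℝ) : ℝ → ℝ → ℝ → ℝ :=
  fun t x y => d1_3 g t x y + tr (u 0) f t x y * d2_3 g t x y + tr (u 1) f t x y * d3_3 g t x y

/-- the material derivative D_t g = ∂_t g + u₁ ∂₁ g + u₂ ∂₂ g for given coefficients u₁,u₂ on ℝ×ℝ² -/
def Dt2 (u : Fin 2 → ℝ → ℝ → ℝ → ℝ) (g : ℝ → ℝ → ℝ → ℝ) : ℝ → ℝ → ℝ → ℝ :=
  fun t x y => d1_3 g t x y + u 0 t x y * d2_3 g t x y + u 1 t x y * d3_3 g t x y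

/-- the tangential deformation derivative D_{F_k} g = F̲₁ₖ ∂₁ g + F̲₂ₖ ∂₂ g -/
def DF (F : Fin 3 → Fin 3 → ℝ → ℝ → ℝ → ℝ → ℝ) (f : ℝ → ℝ → ℝ → ℝ) (k : Fin 3)
    (g : ℝ → ℝ → ℝ → ℝ) : ℝ → ℝ → ℝ → ℝ :=
  fun t x y => tr (F 0 k) f t x y * d2_3 g t x y + tr (F 1 k) f t x y * d3_3 g t x y

/-- the full material derivative D_t g = ∂_t g + Σ u_m ∂_m g on ℝ×ℝ³ -/
def Dt4 (u : Fin 3 → ℝ → ℝ → ℝ → ℝ → ℝ) (g : ℝ → ℝ → ℝ → ℝ → ℝ) : ℝ → ℝ → ℝ → ℝ → ℝ :=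
  fun t x y z => d1_4 g t x y z + ∑ m : Fin 3, u m t x y z * dsp m g t x y z

/-- the spatial Laplacian on ℝ×ℝ³ -/
def lap4 (g : ℝ → ℝ → ℝ → ℝ → ℝ) : ℝ → ℝ → ℝ → ℝ → ℝ :=
  fun t x y z => ∑ k : Fin 3, dsp k (dsp k g) t x y z


/-! ### Auxiliary machinery -/

/-- the product space ℝ⁴ -/
abbrev E4' : Type := ℝ × ℝ × ℝ × ℝ

/-- uncurrying a function of four real variables -/
def unc (g : ℝ → ℝ → ℝ → ℝ → ℝ) : E4' → ℝ := fun p => g p.1 p.2.1 p.2.2.1 p.2.2.2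

/-- the coordinate directions in ℝ⁴ -/
def vv : Fin 4 → E4' := ![(1,0,0,0),(0,1,0,0),(0,0,1,0),(0,0,0,1)]

lemma hasDerivAt_line {W : Type*} [NormedAddCommGroup W] [NormedSpace ℝ W]
    (F : E4' → W) {p : E4'} (hF : DifferentiableAt ℝ F p) (w : E4') (a : ℝ) :
    HasDerivAt (fun s => F (p + (s - a) • w)) (fderiv ℝ F p w) a := by
  have h1 : HasDerivAt (fun s : ℝ => p + (s - a) • w) w a := by
    simpa using (((hasDerivAt_id a).sub_const a).smul_const w).const_add p
  have hF' : HasFDerivAt F (fderiv ℝ F p) (p + (a - a) • w) := by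
    simpa using hF.hasFDerivAt
  simpa [Function.comp_def] using hF'.comp_hasDerivAt a h1

lemma d1_4_eq (φ : E4' → ℝ) {t x y z : ℝ} (hφ : DifferentiableAt ℝ φ (t,x,y,z)) :
    d1_4 (fun a b c e => φ (a,b,c,e)) t x y z = fderiv ℝ φ (t,x,y,z) (vv 0) := by
  have h : (fun s => φ (s,x,y,z)) = fun s => φ ((t,x,y,z) + (s - t) • vv 0) := by
    funext s; congr 1; simp [vv, Prod.ext_iff]
  show deriv (fun s => φ (s,x,y,z)) t = _
  rw [h]
  exact (hasDerivAt_line φ hφ (vv 0) t).deriv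

lemma dsp_eq (m : Fin 3) (φ : E4' → ℝ) {t x y z : ℝ}
    (hφ : DifferentiableAt ℝ φ (t,x,y,z)) :
    dsp m (fun a b c e => φ (a,b,c,e)) t x y z = fderiv ℝ φ (t,x,y,z) (vv m.succ) := by
  fin_cases m
  · have h : (fun s => φ (t,s,y,z)) = fun s => φ ((t,x,y,z) + (s - x) • vv 1) := by
      funext s; congr 1; simp [vv, Prod.ext_iff]
    show deriv (fun s => φ (t,s,y,z)) x = _
    rw [h]
    exact (hasDerivAt_line φ hφ (vv 1) x).deriv
  · have h : (fun s => φ (t,x,s,z)) = fun s => φ ((t,x,y,z) + (s - y) • vv 2) := by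
      funext s; congr 1; simp [vv, Prod.ext_iff]
    show deriv (fun s => φ (t,x,s,z)) y = _
    rw [h]
    exact (hasDerivAt_line φ hφ (vv 2) y).deriv
  · have h : (fun s => φ (t,x,y,s)) = fun s => φ ((t,x,y,z) + (s - z) • vv 3) := by
      funext s; congr 1; simp [vv, Prod.ext_iff]
    show deriv (fun s => φ (t,x,y,s)) z = _
    rw [h]
    exact (hasDerivAt_line φ hφ (vv 3) z).deriv

lemma hasFDerivAt_fderiv_apply (F : E4' → ℝ)
    (hF' : Differentiable ℝ (fderiv ℝ F)) (w p : E4') :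
    HasFDerivAt (fun q => fderiv ℝ F q w)
      ((ContinuousLinearMap.apply ℝ ℝ w).comp (fderiv ℝ (fderiv ℝ F) p)) p :=
  (ContinuousLinearMap.apply ℝ ℝ w).hasFDerivAt.comp p (hF' p).hasFDerivAt

lemma contDiff_fderiv_of_smooth {F : E4' → ℝ} (hF : ContDiff ℝ (⊤:ℕ∞) F) :
    ContDiff ℝ (⊤:ℕ∞) (fun y => fderiv ℝ F y) := by
  apply hF.fderiv_right
  simp

lemma fderiv2_symm (F : E4' → ℝ) (hF : ContDiff ℝ (⊤:ℕ∞) F) (p a b : E4') :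
    fderiv ℝ (fderiv ℝ F) p a b = fderiv ℝ (fderiv ℝ F) p b a := by
  have h1 : Differentiable ℝ F := hF.differentiable (by simp)
  have h2 : Differentiable ℝ (fun y => fderiv ℝ F y) :=
    (contDiff_fderiv_of_smooth hF).differentiable (by simp)
  exact second_derivative_symmetric (fun y => (h1 y).hasFDerivAt) ((h2 p).hasFDerivAt) a b

lemma eq_zero_of_hasFDerivAt_zero_fun {φ : E4' → ℝ} {D : E4' →L[ℝ] ℝ} {p : E4'}
    (h0 : ∀ q, φ q = 0) (hD : HasFDerivAt φ D p) : D = 0 := by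
  have h : φ = fun _ => 0 := funext h0
  rw [← hD.fderiv, h]
  simp

set_option maxHeartbeats 3000000 in
/-- the divergence of a transported deformation column satisfies a pure transport
equation. -/
theorem divergence_transported
    (u G : Fin 3 → ℝ → ℝ → ℝ → ℝ → ℝ)
    (hu : ∀ i, smooth4 (u i)) (hG : ∀ i, smooth4 (G i))
    (hdiv : ∀ t x y z, (∑ m : Fin 3, dsp m (u m) t x y z) = 0)
    (htrans : ∀ i : Fin 3, ∀ t x y z,
      d1_4 (G i) t x y z + ∑ m : Fin 3, u m t x y z * dsp m (G i) t x y z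
        = ∑ m : Fin 3, G m t x y z * dsp m (u i) t x y z) :
    ∀ t x y z,
      d1_4 (fun a b c e => ∑ i : Fin 3, dsp i (G i) a b c e) t x y z
        + ∑ m : Fin 3,
            u m t x y z * dsp m (fun a b c e => ∑ i : Fin 3, dsp i (G i) a b c e) t x y z
        = 0 := by
  -- smoothness repackaged at the uncurried level
  have hUc : ∀ m, ContDiff ℝ (⊤:ℕ∞) (unc (u m)) := fun m => hu m
  have hGc : ∀ i, ContDiff ℝ (⊤:ℕ∞) (unc (G i)) := fun i => hG i
  have hUd : ∀ m, Differentiable ℝ (unc (u m)) := fun m => (hUc m).differentiable (by simp)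
  have hGd : ∀ i, Differentiable ℝ (unc (G i)) := fun i => (hGc i).differentiable (by simp)
  have hUd' : ∀ m, Differentiable ℝ (fderiv ℝ (unc (u m))) := fun m =>
    (contDiff_fderiv_of_smooth (hUc m)).differentiable (by simp)
  have hGd' : ∀ i, Differentiable ℝ (fderiv ℝ (unc (G i))) := fun i =>
    (contDiff_fderiv_of_smooth (hGc i)).differentiable (by simp)
  -- the divergence constraint, uncurried
  have hdiv' : ∀ q : E4', (∑ m : Fin 3, fderiv ℝ (unc (u m)) q (vv m.succ)) = 0 := by
    intro q
    have h := hdiv q.1 q.2.1 q.2.2.1 q.2.2.2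
    rw [← h]
    exact Finset.sum_congr rfl fun m _ => (dsp_eq m (unc (u m)) (hUd m _)).symm
  -- the transport equation, uncurried
  have htrans' : ∀ i : Fin 3, ∀ q : E4',
      fderiv ℝ (unc (G i)) q (vv 0)
        + (∑ m : Fin 3, unc (u m) q * fderiv ℝ (unc (G i)) q (vv m.succ))
        - (∑ m : Fin 3, unc (G m) q * fderiv ℝ (unc (u i)) q (vv m.succ)) = 0 := by
    intro i q
    have h := htrans i q.1 q.2.1 q.2.2.1 q.2.2.2
    have h1 : d1_4 (G i) q.1 q.2.1 q.2.2.1 q.2.2.2 = fderiv ℝ (unc (G i)) q (vv 0) :=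
      d1_4_eq (unc (G i)) (hGd i _)
    have h2 : (∑ m : Fin 3,
          u m q.1 q.2.1 q.2.2.1 q.2.2.2 * dsp m (G i) q.1 q.2.1 q.2.2.1 q.2.2.2)
        = ∑ m : Fin 3, unc (u m) q * fderiv ℝ (unc (G i)) q (vv m.succ) :=
      Finset.sum_congr rfl fun m _ =>
        congrArg (fun r => unc (u m) q * r) (dsp_eq m (unc (G i)) (hGd i _))
    have h3 : (∑ m : Fin 3,
          G m q.1 q.2.1 q.2.2.1 q.2.2.2 * dsp m (u i) q.1 q.2.1 q.2.2.1 q.2.2.2)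
        = ∑ m : Fin 3, unc (G m) q * fderiv ℝ (unc (u i)) q (vv m.succ) :=
      Finset.sum_congr rfl fun m _ =>
        congrArg (fun r => unc (G m) q * r) (dsp_eq m (unc (u i)) (hUd i _))
    rw [h1, h2, h3] at h
    rw [h, sub_self]
  intro t x y z
  -- differentiated divergence constraint
  have hdivD : ∀ w : E4',
      (∑ m : Fin 3, fderiv ℝ (fderiv ℝ (unc (u m))) (t,x,y,z) w (vv m.succ)) = 0 := by
    have hsum : HasFDerivAt (fun q => ∑ m : Fin 3, fderiv ℝ (unc (u m)) q (vv m.succ))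
        (∑ m : Fin 3, (ContinuousLinearMap.apply ℝ ℝ (vv m.succ)).comp
          (fderiv ℝ (fderiv ℝ (unc (u m))) (t,x,y,z))) (t,x,y,z) :=
      HasFDerivAt.fun_sum fun m _ =>
        hasFDerivAt_fderiv_apply (unc (u m)) (hUd' m) (vv m.succ) (t,x,y,z)
    have h0 := eq_zero_of_hasFDerivAt_zero_fun hdiv' hsum
    intro w
    have h1 := congrArg (fun L : E4' →L[ℝ] ℝ => L w) h0
    simpa using h1
  -- differentiated transport equation
  have htransD : ∀ i : Fin 3, ∀ w : E4',
      fderiv ℝ (fderiv ℝ (unc (G i))) (t,x,y,z) w (vv 0)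
        + (∑ m : Fin 3,
            (unc (u m) (t,x,y,z) * fderiv ℝ (fderiv ℝ (unc (G i))) (t,x,y,z) w (vv m.succ)
              + fderiv ℝ (unc (G i)) (t,x,y,z) (vv m.succ) * fderiv ℝ (unc (u m)) (t,x,y,z) w))
        - (∑ m : Fin 3,
            (unc (G m) (t,x,y,z) * fderiv ℝ (fderiv ℝ (unc (u i))) (t,x,y,z) w (vv m.succ)
              + fderiv ℝ (unc (u i)) (t,x,y,z) (vv m.succ) * fderiv ℝ (unc (G m)) (t,x,y,z) w))
        = 0 := by
    intro i
    have hbig : HasFDerivAt (fun q =>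
        fderiv ℝ (unc (G i)) q (vv 0)
          + (∑ m : Fin 3, unc (u m) q * fderiv ℝ (unc (G i)) q (vv m.succ))
          - (∑ m : Fin 3, unc (G m) q * fderiv ℝ (unc (u i)) q (vv m.succ)))
        (((ContinuousLinearMap.apply ℝ ℝ (vv 0)).comp
            (fderiv ℝ (fderiv ℝ (unc (G i))) (t,x,y,z))
          + ∑ m : Fin 3,
              (unc (u m) (t,x,y,z) •
                  ((ContinuousLinearMap.apply ℝ ℝ (vv m.succ)).comp
                    (fderiv ℝ (fderiv ℝ (unc (G i))) (t,x,y,z)))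
                + fderiv ℝ (unc (G i)) (t,x,y,z) (vv m.succ) • fderiv ℝ (unc (u m)) (t,x,y,z)))
          - ∑ m : Fin 3,
              (unc (G m) (t,x,y,z) •
                  ((ContinuousLinearMap.apply ℝ ℝ (vv m.succ)).comp
                    (fderiv ℝ (fderiv ℝ (unc (u i))) (t,x,y,z)))
                + fderiv ℝ (unc (u i)) (t,x,y,z) (vv m.succ) • fderiv ℝ (unc (G m)) (t,x,y,z)))
        (t,x,y,z) := by
      refine HasFDerivAt.sub (HasFDerivAt.add ?_ (HasFDerivAt.fun_sum fun m _ => ?_))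
        (HasFDerivAt.fun_sum fun m _ => ?_)
      · exact hasFDerivAt_fderiv_apply (unc (G i)) (hGd' i) (vv 0) (t,x,y,z)
      · exact (hUd m _).hasFDerivAt.mul
          (hasFDerivAt_fderiv_apply (unc (G i)) (hGd' i) (vv m.succ) (t,x,y,z))
      · exact (hGd m _).hasFDerivAt.mul
          (hasFDerivAt_fderiv_apply (unc (u i)) (hUd' i) (vv m.succ) (t,x,y,z))
    have h0 := eq_zero_of_hasFDerivAt_zero_fun (htrans' i) hbig
    intro w
    have h1 := congrArg (fun L : E4' →L[ℝ] ℝ => L w) h0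
    simpa [mul_comm] using h1
  -- second-derivative symmetry
  have SG : ∀ (i : Fin 3) (a b : E4'),
      fderiv ℝ (fderiv ℝ (unc (G i))) (t,x,y,z) a b
        = fderiv ℝ (fderiv ℝ (unc (G i))) (t,x,y,z) b a :=
    fun i => fderiv2_symm _ (hGc i) _
  have SU : ∀ (i : Fin 3) (a b : E4'),
      fderiv ℝ (fderiv ℝ (unc (u i))) (t,x,y,z) a b
        = fderiv ℝ (fderiv ℝ (unc (u i))) (t,x,y,z) b a :=
    fun i => fderiv2_symm _ (hUc i) _
  -- rewrite the goal through the uncurried divergence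
  set φD : E4' → ℝ := fun q => ∑ i : Fin 3, fderiv ℝ (unc (G i)) q (vv i.succ) with hφDdef
  have hDfun : (fun a b c e => ∑ i : Fin 3, dsp i (G i) a b c e)
      = fun a b c e => φD (a,b,c,e) := by
    funext a b c e
    exact Finset.sum_congr rfl fun i _ => dsp_eq i (unc (G i)) (hGd i _)
  have hφDdiff : Differentiable ℝ φD := by
    apply Differentiable.fun_sum
    intro i _
    exact (hGd' i).clm_apply (differentiable_const _)
  have hfφD : ∀ w : E4', fderiv ℝ φD (t,x,y,z) w
      = ∑ i : Fin 3, fderiv ℝ (fderiv ℝ (unc (G i))) (t,x,y,z) w (vv i.succ) := by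
    have hsum : HasFDerivAt φD
        (∑ i : Fin 3, (ContinuousLinearMap.apply ℝ ℝ (vv i.succ)).comp
          (fderiv ℝ (fderiv ℝ (unc (G i))) (t,x,y,z))) (t,x,y,z) :=
      HasFDerivAt.fun_sum fun i _ =>
        hasFDerivAt_fderiv_apply (unc (G i)) (hGd' i) (vv i.succ) (t,x,y,z)
    intro w
    rw [hsum.fderiv]
    simp
  have hgsum : (∑ m : Fin 3,
        u m t x y z * dsp m (fun a b c e => φD (a,b,c,e)) t x y z)
      = ∑ m : Fin 3, unc (u m) (t,x,y,z) * fderiv ℝ φD (t,x,y,z) (vv m.succ) :=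
    Finset.sum_congr rfl fun m _ =>
      congrArg (fun r => unc (u m) (t,x,y,z) * r) (dsp_eq m φD (hφDdiff _))
  rw [hDfun, hgsum, d1_4_eq φD (hφDdiff _)]
  simp only [hfφD]
  -- expand all sums and finish by linear algebra
  have s0 : (0 : Fin 3).succ = (1 : Fin 4) := rfl
  have s1 : (1 : Fin 3).succ = (2 : Fin 4) := rfl
  have s2 : (2 : Fin 3).succ = (3 : Fin 4) := rfl
  have T0 := htransD 0 (vv 1); have T1 := htransD 1 (vv 2); have T2 := htransD 2 (vv 3)
  have D1 := hdivD (vv 1); have D2 := hdivD (vv 2); have D3 := hdivD (vv 3)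
  simp only [Fin.sum_univ_three, s0, s1, s2] at T0 T1 T2 D1 D2 D3 ⊢
  linear_combination T0 + T1 + T2
    + SG 0 (vv 0) (vv 1) + SG 1 (vv 0) (vv 2) + SG 2 (vv 0) (vv 3)
    + unc (u 0) (t,x,y,z) * (SG 0 (vv 1) (vv 1) + SG 1 (vv 1) (vv 2) + SG 2 (vv 1) (vv 3))
    + unc (u 1) (t,x,y,z) * (SG 0 (vv 2) (vv 1) + SG 1 (vv 2) (vv 2) + SG 2 (vv 2) (vv 3))
    + unc (u 2) (t,x,y,z) * (SG 0 (vv 3) (vv 1) + SG 1 (vv 3) (vv 2) + SG 2 (vv 3) (vv 3))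
    + unc (G 0) (t,x,y,z) * (SU 0 (vv 1) (vv 1) + SU 1 (vv 2) (vv 1) + SU 2 (vv 3) (vv 1))
    + unc (G 1) (t,x,y,z) * (SU 0 (vv 1) (vv 2) + SU 1 (vv 2) (vv 2) + SU 2 (vv 3) (vv 2))
    + unc (G 2) (t,x,y,z) * (SU 0 (vv 1) (vv 3) + SU 1 (vv 2) (vv 3) + SU 2 (vv 3) (vv 3))
    + unc (G 0) (t,x,y,z) * D1 + unc (G 1) (t,x,y,z) * D2 + unc (G 2) (t,x,y,z) * D3
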